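/- Let X ∈ ℝ^{k×p} and T ∈ ℝ^{n×k} with ⟨T, T(XXᵀ)⟩ ≠ 0. Define the spectral (Barzilai–Borwein) stepsizes α^{BB1} = (1/2)·⟨T,T⟩ / ⟨T, T(XXᵀ)⟩ and α^{BB2} = (1/2)·⟨T, T(XXᵀ)⟩ / ⟨T(XXᵀ), T(XXᵀ)⟩. Then 1/(2‖XXᵀ‖₂) ≤ α^{BB2} ≤ min{ α^{BB1}, 1/(2σ_min²(X)) }, where σ_min(X) denotes the smallest nonzero singular value of X. -/

import Mathlib

open Matrix

noncomputable def specNorm {α β : Type*} [Fintype α] [Fintype β] [DecidableEq β]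
    (A : Matrix α β ℝ) : ℝ :=
  ‖LinearMap.toContinuousLinearMap (Matrix.toEuclideanLin A)‖

/-- Bounds on the Barzilai–Borwein stepsizes for the `D`-block of the DL problem:
`1/(2‖XXᵀ‖₂) ≤ α^{BB2} ≤ min{α^{BB1}, 1/(2 σ_min²(X))}`, where `σ_min(X)` is the
smallest nonzero singular value of `X`. -/
theorem bb_stepsize_bounds_D
    {n k p : ℕ} (X : Matrix (Fin k) (Fin p) ℝ) (T : Matrix (Fin n) (Fin k) ℝ)
    (hX : (X * Xᵀ).IsHermitian)
    (σmin : ℝ) (hσpos : 0 < σmin)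
    (hσeig : ∃ i, hX.eigenvalues i = σmin ^ 2)
    (hσmin : ∀ i, hX.eigenvalues i ≠ 0 → σmin ^ 2 ≤ hX.eigenvalues i)
    (hT : (Tᵀ * (T * (X * Xᵀ))).trace ≠ 0)
    (αBB1 αBB2 : ℝ)
    (h1 : αBB1 = (1 / 2) * (Tᵀ * T).trace / (Tᵀ * (T * (X * Xᵀ))).trace)
    (h2 : αBB2 = (1 / 2) * (Tᵀ * (T * (X * Xᵀ))).trace /
      ((T * (X * Xᵀ))ᵀ * (T * (X * Xᵀ))).trace) :
    1 / (2 * specNorm (X * Xᵀ)) ≤ αBB2 ∧ αBB2 ≤ min αBB1 (1 / (2 * σmin ^ 2)) := by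
  set A := X * Xᵀ with hAdef
  set U : Matrix (Fin k) (Fin k) ℝ := (hX.eigenvectorUnitary : Matrix (Fin k) (Fin k) ℝ)
    with hUdef
  set lam := hX.eigenvalues with hlamdef
  -- spectral theorem
  have hspec : A = U * diagonal lam * Uᵀ := by
    have := hX.spectral_theorem
    simpa [star_eq_conjTranspose, conjTranspose_eq_transpose_of_trivial, Function.comp]
      using this
  have hUU : U * Uᵀ = 1 := by
    have := (Matrix.mem_unitaryGroup_iff).mp hX.eigenvectorUnitary.2
    simpa [star_eq_conjTranspose, conjTranspose_eq_transpose_of_trivial] using this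
  have hUtU : Uᵀ * U = 1 := by
    have := (Matrix.mem_unitaryGroup_iff').mp hX.eigenvectorUnitary.2
    simpa [star_eq_conjTranspose, conjTranspose_eq_transpose_of_trivial] using this
  set S : Matrix (Fin n) (Fin k) ℝ := T * U with hSdef
  set w : Fin k → ℝ := fun i => ∑ j, (S j i) ^ 2 with hwdef
  have hwnn : ∀ i, 0 ≤ w i := fun i => Finset.sum_nonneg fun j _ => sq_nonneg _
  have hlamnn : ∀ i, 0 ≤ lam i := by
    intro i
    have hPSD : A.PosSemidef := by
      simpa [hAdef] using Matrix.posSemidef_self_mul_conjTranspose X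
    exact hPSD.eigenvalues_nonneg i
  -- key trace computation
  have key : ∀ B : Matrix (Fin k) (Fin k) ℝ,
      (Tᵀ * (T * (U * B * Uᵀ))).trace = (Sᵀ * S * B).trace := by
    intro B
    have e : Tᵀ * (T * (U * B * Uᵀ)) = (Tᵀ * T * U * B) * Uᵀ := by
      simp [Matrix.mul_assoc]
    rw [e, Matrix.trace_mul_comm]
    congr 1
    simp [hSdef, Matrix.transpose_mul, Matrix.mul_assoc]
  have diagtr : ∀ d : Fin k → ℝ, (Sᵀ * S * diagonal d).trace = ∑ i, w i * d i := by
    intro d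
    rw [Matrix.trace]
    refine Finset.sum_congr rfl fun i _ => ?_
    rw [Matrix.diag_apply, Matrix.mul_diagonal]
    congr 1
    simp [Matrix.mul_apply, hwdef, sq]
  -- the three trace identities
  have e1 : (Tᵀ * T).trace = ∑ i, w i := by
    have : Tᵀ * T = Tᵀ * (T * (U * 1 * Uᵀ)) := by
      simp [hUU]
    rw [this, key, Matrix.mul_one]
    have := diagtr (fun _ => 1)
    simpa [Matrix.diagonal_one] using this
  have e2 : (Tᵀ * (T * A)).trace = ∑ i, lam i * w i := by
    rw [show Tᵀ * (T * A) = Tᵀ * (T * (U * diagonal lam * Uᵀ)) by rw [← hspec], key,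
      diagtr]
    exact Finset.sum_congr rfl fun i _ => mul_comm _ _
  have hAsymm : Aᵀ = A := by
    exact (by simpa [conjTranspose_eq_transpose_of_trivial] using hX : A.IsSymm)
  have hAA : A * A = U * (diagonal fun i => lam i * lam i) * Uᵀ := by
    conv_lhs => rw [hspec]
    rw [show U * diagonal lam * Uᵀ * (U * diagonal lam * Uᵀ)
        = U * diagonal lam * (Uᵀ * U) * diagonal lam * Uᵀ by noncomm_ring,
      hUtU, Matrix.mul_one,
      show U * diagonal lam * diagonal lam * Uᵀ
        = U * (diagonal lam * diagonal lam) * Uᵀ by noncomm_ring,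
      diagonal_mul_diagonal]
  have e3 : ((T * A)ᵀ * (T * A)).trace = ∑ i, lam i ^ 2 * w i := by
    rw [show (T * A)ᵀ * (T * A) = A * (Tᵀ * (T * A)) by
        rw [transpose_mul, hAsymm, Matrix.mul_assoc],
      Matrix.trace_mul_comm,
      show Tᵀ * (T * A) * A = Tᵀ * (T * (A * A)) by simp [Matrix.mul_assoc],
      hAA, key, diagtr]
    exact Finset.sum_congr rfl fun i _ => by simp [sq]; ring
  -- abbreviations
  set a := (Tᵀ * T).trace
  set b := (Tᵀ * (T * A)).trace
  set c := ((T * A)ᵀ * (T * A)).trace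
  have hbnn : 0 ≤ b := by
    rw [e2]; exact Finset.sum_nonneg fun i _ => mul_nonneg (hlamnn i) (hwnn i)
  have hbpos : 0 < b := lt_of_le_of_ne hbnn (Ne.symm hT)
  -- σ² b ≤ c
  have hσb : σmin ^ 2 * b ≤ c := by
    rw [e2, e3, Finset.mul_sum]
    refine Finset.sum_le_sum fun i _ => ?_
    rcases eq_or_ne (lam i) 0 with h | h
    · simp [h]
    · have h1 : σmin ^ 2 ≤ lam i := hσmin i h
      have h2 : 0 ≤ lam i * w i * (lam i - σmin ^ 2) :=
        mul_nonneg (mul_nonneg (hlamnn i) (hwnn i)) (sub_nonneg.2 h1)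
      nlinarith [h2]
  have hcpos : 0 < c :=
    lt_of_lt_of_le (by positivity) hσb
  -- Cauchy-Schwarz : b^2 ≤ a * c
  have hCS : b ^ 2 ≤ a * c := by
    rw [e1, e2, e3]
    have h := Finset.sum_mul_sq_le_sq_mul_sq Finset.univ
      (fun i => Real.sqrt (w i)) (fun i => lam i * Real.sqrt (w i))
    calc (∑ i, lam i * w i) ^ 2
        = (∑ i, Real.sqrt (w i) * (lam i * Real.sqrt (w i))) ^ 2 := by
          congr 1; refine Finset.sum_congr rfl fun i _ => ?_
          rw [show Real.sqrt (w i) * (lam i * Real.sqrt (w i))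
              = lam i * (Real.sqrt (w i) * Real.sqrt (w i)) by ring,
            Real.mul_self_sqrt (hwnn i)]
      _ ≤ (∑ i, Real.sqrt (w i) ^ 2) * ∑ i, (lam i * Real.sqrt (w i)) ^ 2 := h
      _ = (∑ i, w i) * ∑ i, lam i ^ 2 * w i := by
          congr 1
          · exact Finset.sum_congr rfl fun i _ => Real.sq_sqrt (hwnn i)
          · refine Finset.sum_congr rfl fun i _ => ?_
            rw [mul_pow, Real.sq_sqrt (hwnn i)]
  -- eigenvalues are bounded by the spectral norm
  have hlamN : ∀ i, lam i ≤ specNorm A := by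
    intro i
    set L := LinearMap.toContinuousLinearMap (Matrix.toEuclideanLin A) with hL
    have hv : L (hX.eigenvectorBasis i) = lam i • hX.eigenvectorBasis i := by
      have h0 := hX.mulVec_eigenvectorBasis i
      apply (WithLp.equiv 2 (Fin k → ℝ)).injective
      simp only [hL, LinearMap.coe_toContinuousLinearMap']
      rw [WithLp.equiv_apply, Matrix.ofLp_toEuclideanLin_apply]
      simpa using h0
    have hnv : ‖(hX.eigenvectorBasis i : EuclideanSpace ℝ (Fin k))‖ = 1 :=
      hX.eigenvectorBasis.orthonormal.1 i
    have := L.le_opNorm (hX.eigenvectorBasis i)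
    rw [hv, norm_smul, hnv, mul_one, mul_one] at this
    exact le_trans (le_abs_self _) this
  have hNb : c ≤ specNorm A * b := by
    rw [e2, e3, Finset.mul_sum]
    refine Finset.sum_le_sum fun i _ => ?_
    calc lam i ^ 2 * w i = lam i * (lam i * w i) := by ring
      _ ≤ specNorm A * (lam i * w i) :=
        mul_le_mul_of_nonneg_right (hlamN i) (mul_nonneg (hlamnn i) (hwnn i))
  have hNpos : 0 < specNorm A := by
    by_contra h
    push_neg at h
    have : specNorm A * b ≤ 0 := mul_nonpos_of_nonpos_of_nonneg h hbnn
    linarith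
  constructor
  · -- 1/(2N) ≤ αBB2
    rw [h2]
    rw [div_le_div_iff₀ (by positivity) (by positivity)]
    calc 1 * ((T * A)ᵀ * (T * A)).trace = c := one_mul _
      _ ≤ specNorm A * b := hNb
      _ = 1 / 2 * b * (2 * specNorm A) := by ring
  · refine le_min ?_ ?_
    · rw [h1, h2, div_le_div_iff₀ hcpos hbpos]
      nlinarith [hCS]
    · rw [h2, div_le_div_iff₀ hcpos (by positivity : (0:ℝ) < 2 * σmin ^ 2)]
      nlinarith [hσb]
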